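/- Fix n ≥ 2, N ≥ 1, and integers 1 ≤ a ≤ b ≤ n−1 with a + b ≤ n. Let E be the set of n × N Boolean measurement matrices all of whose columns have Hamming weight a−1, b, or b+1. Then E is a multidimensional fooling set for the block interval function Π_{[a,b]}^N: for any two distinct matrices M₁, M₂ ∈ E with Π_{[a,b]}^N(M₁) = Π_{[a,b]}^N(M₂), there exists a row index i* such that replacing row i* of one matrix by row i* of the other yields a matrix M* with Π_{[a,b]}^N(M*) ≠ Π_{[a,b]}^N(M₁). -/

import Mathlib

/-- The Hamming weight of the `j`-th column of an `n × N` Boolean measurement matrix. -/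
def colWeight {n N : ℕ} (M : Fin n → Fin N → Bool) (j : Fin N) : ℕ :=
  (Finset.univ.filter fun i => M i j = true).card

/-- The block interval function `Π_{[a,b]}^N`: its `j`-th coordinate is `1` iff the `j`-th
column of `M` has between `a` and `b` ones. -/
def blockInterval {n N : ℕ} (a b : ℕ) (M : Fin n → Fin N → Bool) : Fin N → Bool :=
  fun j => decide (a ≤ colWeight M j ∧ colWeight M j ≤ b)

lemma cw_update_add {n N : ℕ} {M : Fin n → Fin N → Bool} {i : Fin n} {r : Fin N → Bool}
    {j : Fin N} (h1 : M i j = false) (h2 : r j = true) :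
    colWeight (Function.update M i r) j = colWeight M j + 1 := by
  unfold colWeight
  have hset : (Finset.univ.filter fun i' => Function.update M i r i' j = true)
      = insert i (Finset.univ.filter fun i' => M i' j = true) := by
    ext i'
    by_cases hi : i' = i <;> simp [Function.update_apply, hi, h1, h2]
  rw [hset, Finset.card_insert_of_notMem (by simp [h1])]

lemma cw_update_sub {n N : ℕ} {M : Fin n → Fin N → Bool} {i : Fin n} {r : Fin N → Bool}
    {j : Fin N} (h1 : M i j = true) (h2 : r j = false) :
    colWeight (Function.update M i r) j + 1 = colWeight M j := by
  unfold colWeight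
  have hset : (Finset.univ.filter fun i' => M i' j = true)
      = insert i (Finset.univ.filter fun i' => Function.update M i r i' j = true) := by
    ext i'
    by_cases hi : i' = i <;> simp [Function.update_apply, hi, h1, h2]
  rw [hset, Finset.card_insert_of_notMem (by simp [Function.update_apply, h2])]

/-- If some row witnesses M₂ ⊄ M₁ in column j and M₂'s column is pointwise below M₁'s
except possibly..., counting lemma: strict subset gives strict card inequality. -/
lemma cw_lt {n N : ℕ} {M₁ M₂ : Fin n → Fin N → Bool} {j : Fin N}
    (hsub : ∀ i, M₂ i j = true → M₁ i j = true)
    (i₀ : Fin n) (h1 : M₁ i₀ j = true) (h2 : M₂ i₀ j = false) :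
    colWeight M₂ j < colWeight M₁ j := by
  apply Finset.card_lt_card
  constructor
  · intro i hi
    simp only [Finset.mem_filter, Finset.mem_univ, true_and] at hi ⊢
    exact hsub i hi
  · intro hcon
    have := hcon (Finset.mem_filter.mpr ⟨Finset.mem_univ i₀, h1⟩)
    simp [h2] at this

/-- For `a + b ≤ n`, the set of measurement matrices all of whose columns
have Hamming weight `a−1`, `b` or `b+1` is a multidimensional fooling set for the block
interval function `Π_{[a,b]}^N`. -/
theorem interval_fooling_set_low (n N a b : ℕ)
    (hn : 2 ≤ n) (hN : 1 ≤ N) (ha : 1 ≤ a) (hab : a ≤ b) (hb : b ≤ n - 1)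
    (hsum : a + b ≤ n)
    (M₁ M₂ : Fin n → Fin N → Bool)
    (h₁ : ∀ j, colWeight M₁ j = a - 1 ∨ colWeight M₁ j = b ∨ colWeight M₁ j = b + 1)
    (h₂ : ∀ j, colWeight M₂ j = a - 1 ∨ colWeight M₂ j = b ∨ colWeight M₂ j = b + 1)
    (hne : M₁ ≠ M₂)
    (heq : blockInterval a b M₁ = blockInterval a b M₂) :
    ∃ i : Fin n,
      blockInterval a b (Function.update M₁ i (M₂ i)) ≠ blockInterval a b M₁ ∨
      blockInterval a b (Function.update M₂ i (M₁ i)) ≠ blockInterval a b M₁ := by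
  -- find a differing entry
  have : ∃ i j, M₁ i j ≠ M₂ i j := by
    by_contra h
    push_neg at h
    exact hne (funext fun i => funext fun j => h i j)
  obtain ⟨i₀, j, hij⟩ := this
  have heqj : blockInterval a b M₁ j = blockInterval a b M₂ j := congrFun heq j
  -- helper to conclude from a flipped column
  have conclude₁ : ∀ i : Fin n,
      blockInterval a b (Function.update M₁ i (M₂ i)) j ≠ blockInterval a b M₁ j →
      (∃ i : Fin n,
        blockInterval a b (Function.update M₁ i (M₂ i)) ≠ blockInterval a b M₁ ∨
        blockInterval a b (Function.update M₂ i (M₁ i)) ≠ blockInterval a b M₁) := by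
    intro i h
    exact ⟨i, Or.inl fun hc => h (congrFun hc j)⟩
  have conclude₂ : ∀ i : Fin n,
      blockInterval a b (Function.update M₂ i (M₁ i)) j ≠ blockInterval a b M₁ j →
      (∃ i : Fin n,
        blockInterval a b (Function.update M₁ i (M₂ i)) ≠ blockInterval a b M₁ ∨
        blockInterval a b (Function.update M₂ i (M₁ i)) ≠ blockInterval a b M₁) := by
    intro i h
    exact ⟨i, Or.inr fun hc => h (congrFun hc j)⟩
  have hw2lb : a - 1 ≤ colWeight M₂ j := by
    rcases h₂ j with h | h | h <;> omega
  have hw1lb : a - 1 ≤ colWeight M₁ j := by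
    rcases h₁ j with h | h | h <;> omega
  rcases h₁ j with hw1 | hw1 | hw1
  · -- weight a-1 in M₁: find i with M₁ i j = false, M₂ i j = true
    have : ∃ i, M₁ i j = false ∧ M₂ i j = true := by
      by_contra h
      push_neg at h
      have hsub : ∀ i, M₂ i j = true → M₁ i j = true := by
        intro i hi
        cases hM : M₁ i j
        · exact absurd hi (h i hM)
        · rfl
      have h1 : M₁ i₀ j = true := by
        cases hM : M₁ i₀ j
        · cases hM2 : M₂ i₀ j
          · exact absurd (hM.trans hM2.symm) hij
          · exact absurd hM2 (h i₀ hM)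
        · rfl
      have h2 : M₂ i₀ j = false := by
        cases hM2 : M₂ i₀ j
        · rfl
        · exact absurd (h1.trans hM2.symm) hij
      have := cw_lt hsub i₀ h1 h2
      omega
    obtain ⟨i, hM1, hM2⟩ := this
    apply conclude₁ i
    have hup : colWeight (Function.update M₁ i (M₂ i)) j = colWeight M₁ j + 1 :=
      cw_update_add hM1 hM2
    simp only [blockInterval, hup, hw1, ne_eq, decide_eq_decide]
    omega
  · -- weight b in M₁
    have hw2 : colWeight M₂ j = b := by
      rcases h₂ j with h | h | h
      · exfalso
        simp only [blockInterval, hw1, h, decide_eq_decide] at heqj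
        omega
      · exact h
      · exfalso
        simp only [blockInterval, hw1, h, decide_eq_decide] at heqj
        omega
    cases hM1 : M₁ i₀ j
    · -- M₂ i₀ j = true, update M₁ at i₀ gives weight b+1
      have hM2 : M₂ i₀ j = true := by
        cases hM2 : M₂ i₀ j
        · exact absurd (hM1.trans hM2.symm) hij
        · rfl
      apply conclude₁ i₀
      have hup : colWeight (Function.update M₁ i₀ (M₂ i₀)) j = colWeight M₁ j + 1 :=
        cw_update_add hM1 hM2
      simp only [blockInterval, hup, hw1, ne_eq, decide_eq_decide]
      omega
    · -- M₂ i₀ j = false, update M₂ at i₀ gives weight b+1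
      have hM2 : M₂ i₀ j = false := by
        cases hM2 : M₂ i₀ j
        · rfl
        · exact absurd (hM1.trans hM2.symm) hij
      apply conclude₂ i₀
      have hup : colWeight (Function.update M₂ i₀ (M₁ i₀)) j = colWeight M₂ j + 1 :=
        cw_update_add hM2 hM1
      simp only [blockInterval, hup, hw2, hw1, ne_eq, decide_eq_decide]
      omega
  · -- weight b+1 in M₁: find i with M₁ i j = true, M₂ i j = false
    have hw2ub : colWeight M₂ j ≤ b + 1 := by
      rcases h₂ j with h | h | h <;> omega
    have : ∃ i, M₁ i j = true ∧ M₂ i j = false := by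
      by_contra h
      push_neg at h
      have hsub : ∀ i, M₁ i j = true → M₂ i j = true := by
        intro i hi
        cases hM : M₂ i j
        · exact absurd hM (h i hi)
        · rfl
      have h2 : M₂ i₀ j = true := by
        cases hM2 : M₂ i₀ j
        · cases hM : M₁ i₀ j
          · exact absurd (hM.trans hM2.symm) hij
          · exact absurd hM2 (h i₀ hM)
        · rfl
      have h1 : M₁ i₀ j = false := by
        cases hM : M₁ i₀ j
        · rfl
        · exact absurd (hM.trans (hsub i₀ hM).symm) hij
      have := cw_lt hsub i₀ h2 h1
      omega
    obtain ⟨i, hM1, hM2⟩ := this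
    apply conclude₁ i
    have hup : colWeight (Function.update M₁ i (M₂ i)) j + 1 = colWeight M₁ j :=
      cw_update_sub hM1 hM2
    simp only [blockInterval, hw1, ne_eq, decide_eq_decide]
    omega
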